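/- arXiv:2005.03287 — 3 statements merged into one kernel-verified Lean document; each statement's English description precedes it below -/
import Mathlib

section
/- A matrix M ∈ ℝ^{n×n} is a P-matrix (all principal minors positive) if and only if the matrix MD + I - D is nonsingular for every diagonal matrix D = diag(d_i) with 0 ≤ d_i ≤ 1. -/
open Matrix

/-- A square real matrix is a `P`-matrix if all of its principal minors are positive. -/
def IsPMatrix {n : ℕ} (M : Matrix (Fin n) (Fin n) ℝ) : Prop :=
  ∀ s : Finset (Fin n), s.Nonempty →
    0 < (M.submatrix (fun i : s => (i : Fin n)) (fun i : s => (i : Fin n))).det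

/-- The (unordered) singular values of a real square matrix: square roots of the
eigenvalues of `Aᵀ * A`. -/
noncomputable def singVals {n : ℕ} (A : Matrix (Fin n) (Fin n) ℝ) : Fin n → ℝ :=
  fun i => Real.sqrt ((show (Aᵀ * A).IsHermitian by simpa using Matrix.isHermitian_conjTranspose_mul_self A).eigenvalues i)

/-- `svalsDecr A i` is the `i`-th largest singular value of `A` (so `svalsDecr A 0 = σ₁`). -/
noncomputable def svalsDecr {n : ℕ} (A : Matrix (Fin n) (Fin n) ℝ) : Fin n → ℝ :=
  fun i => singVals A (Tuple.sort (singVals A) (Fin.rev i))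

/-- The maximal singular value `σ₁`. -/
noncomputable def maxSV {n : ℕ} (A : Matrix (Fin n) (Fin n) ℝ) : ℝ :=
  ⨆ i, singVals A i

/-- The minimal singular value `σₙ`. -/
noncomputable def minSV {n : ℕ} (A : Matrix (Fin n) (Fin n) ℝ) : ℝ :=
  ⨅ i, singVals A i

/-- The spectral radius of a real square matrix (as the spectral radius of its
complexification), valued in `ℝ≥0∞`. -/
noncomputable def specRad {n : ℕ} (A : Matrix (Fin n) (Fin n) ℝ) : ENNReal :=
  spectralRadius ℂ (A.map (Complex.ofReal))

section Aux
variable {n : ℕ}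

def uRows (M : Matrix (Fin n) (Fin n) ℝ) (s : Finset (Fin n)) :
    Matrix (Fin n) (Fin n) ℝ :=
  Matrix.of fun j i => if j ∈ s then M i j else (if i = j then (1:ℝ) else 0)


lemma det_unit_rows (M : Matrix (Fin n) (Fin n) ℝ) (s : Finset (Fin n)) :
    (uRows M s).det
      = (M.submatrix (fun i : s => (i : Fin n)) (fun i : s => (i : Fin n))).det := by
  classical
  set B : Matrix (Fin n) (Fin n) ℝ := uRows M s with hB
  let e : {x : Fin n // x ∈ s} ⊕ {x : Fin n // ¬ x ∈ s} ≃ Fin n :=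
    Equiv.sumCompl (· ∈ s)
  have h1 : B.det = (B.submatrix e e).det := (Matrix.det_submatrix_equiv_self e B).symm
  have h2 : B.submatrix e e =
      Matrix.fromBlocks
        ((M.submatrix (fun i : s => (i : Fin n)) (fun i : s => (i : Fin n)))ᵀ)
        (Matrix.of fun (a : {x : Fin n // x ∈ s}) (b : {x : Fin n // ¬ x ∈ s}) =>
          M (b : Fin n) (a : Fin n))
        0 1 := by
    ext i j
    cases i with
    | inl i =>
      cases j with
      | inl j => simp [B, uRows, e, i.2]
      | inr j => simp [B, uRows, e, i.2]
    | inr i =>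
      cases j with
      | inl j =>
        have hne : (j : Fin n) ≠ (i : Fin n) := fun h => i.2 (h ▸ j.2)
        simp [B, uRows, e, i.2, Pi.single_apply, hne]
      | inr j =>
        have hco : ((j : Fin n) = (i : Fin n)) ↔ j = i := Subtype.coe_inj
        by_cases hji : i = j
        · simp [B, uRows, e, i.2, j.2, Matrix.one_apply, hji]
        · have hne2 : ¬(j = i) := fun hh => hji hh.symm
          simp [B, uRows, e, i.2, j.2, Matrix.one_apply, hji, hne2, Subtype.coe_inj]
  rw [h1, h2, Matrix.det_fromBlocks_zero₂₁, Matrix.det_one, mul_one, Matrix.det_transpose]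

lemma det_expand (M : Matrix (Fin n) (Fin n) ℝ) (d : Fin n → ℝ) :
    (M * Matrix.diagonal d + 1 - Matrix.diagonal d).det
      = ∑ s : Finset (Fin n),
          ((∏ i ∈ s, d i) * ∏ i ∈ sᶜ, (1 - d i)) *
            (M.submatrix (fun i : s => (i : Fin n)) (fun i : s => (i : Fin n))).det := by
  classical
  rw [← Matrix.det_transpose]
  set a : Matrix (Fin n) (Fin n) ℝ := fun j => d j • (Mᵀ j) with ha
  set b : Matrix (Fin n) (Fin n) ℝ := fun j => (1 - d j) • (Pi.single j 1 : Fin n → ℝ) with hb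
  have hA : (M * Matrix.diagonal d + 1 - Matrix.diagonal d)ᵀ
      = a + b := by
    funext j i
    show _ = a j i + b j i
    simp only [ha, hb, Matrix.transpose_apply, Matrix.sub_apply, Matrix.add_apply,
      Matrix.mul_apply, Matrix.diagonal_apply, Matrix.one_apply, Pi.add_apply, Pi.smul_apply,
      smul_eq_mul, Pi.single_apply, mul_ite, mul_zero]
    rw [Finset.sum_ite_eq' Finset.univ j (fun x => M i x * d x)]
    simp only [Finset.mem_univ, if_true]
    by_cases h : i = j <;> simp [h] <;> ring
  have hdet : ∀ A : Matrix (Fin n) (Fin n) ℝ, A.det = Matrix.detRowAlternating A :=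
    fun _ => rfl
  rw [hdet, hA]
  rw [show (Matrix.detRowAlternating (a + b))
    = (Matrix.detRowAlternating (R := ℝ) (n := Fin n)).toMultilinearMap
      ((a : Fin n → Fin n → ℝ) + (b : Fin n → Fin n → ℝ)) from rfl]
  refine ((Matrix.detRowAlternating (R := ℝ) (n := Fin n)).toMultilinearMap.map_add_univ
    (a : Fin n → Fin n → ℝ) (b : Fin n → Fin n → ℝ)).trans ?_
  refine Finset.sum_congr rfl fun s _ => ?_
  have hpw : (Finset.piecewise s a b)
      = fun j => (if j ∈ s then d j else 1 - d j) • (uRows M s j) := by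
    funext j i
    by_cases h : j ∈ s <;> simp [Finset.piecewise, h, ha, hb, uRows, Pi.single_apply]
  rw [hpw]
  refine ((Matrix.detRowAlternating (R := ℝ) (n := Fin n)).toMultilinearMap.map_smul_univ
    (fun j => if j ∈ s then d j else 1 - d j) (fun j => (uRows M s j : Fin n → ℝ))).trans ?_
  have hprod : (∏ j, (if j ∈ s then d j else 1 - d j))
      = (∏ i ∈ s, d i) * ∏ i ∈ sᶜ, (1 - d i) := by
    rw [← Finset.prod_mul_prod_compl s]
    congr 1
    · exact Finset.prod_congr rfl fun i hi => by simp [hi]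
    · exact Finset.prod_congr rfl fun i hi => by simp [Finset.mem_compl.mp hi]
  rw [hprod, smul_eq_mul]
  congr 1
  exact det_unit_rows M s

lemma weights_sum_one (d : Fin n → ℝ) :
    ∑ s : Finset (Fin n), (∏ i ∈ s, d i) * ∏ i ∈ sᶜ, (1 - d i) = 1 := by
  classical
  have h := Finset.prod_add d (fun i => 1 - d i) (Finset.univ : Finset (Fin n))
  simp only [show ∀ i : Fin n, d i + (1 - d i) = 1 from fun i => by ring,
    Finset.prod_const_one, Finset.powerset_univ] at h
  simp only [Finset.compl_eq_univ_sdiff]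
  exact h.symm

end Aux

theorem stmt0 {n : ℕ} (M : Matrix (Fin n) (Fin n) ℝ) :
    IsPMatrix M ↔
      ∀ d : Fin n → ℝ, (∀ i, d i ∈ Set.Icc (0 : ℝ) 1) →
        IsUnit (M * Matrix.diagonal d + 1 - Matrix.diagonal d) := by
  classical
  constructor
  · intro hP d hd
    rw [Matrix.isUnit_iff_isUnit_det, isUnit_iff_ne_zero]
    have hpos : 0 < (M * Matrix.diagonal d + 1 - Matrix.diagonal d).det := by
      rw [det_expand]
      have hterm : ∀ s : Finset (Fin n),
          0 ≤ ((∏ i ∈ s, d i) * ∏ i ∈ sᶜ, (1 - d i)) *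
            (M.submatrix (fun i : s => (i : Fin n)) (fun i : s => (i : Fin n))).det := by
        intro s
        have hw : 0 ≤ (∏ i ∈ s, d i) * ∏ i ∈ sᶜ, (1 - d i) :=
          mul_nonneg (Finset.prod_nonneg fun i _ => (hd i).1)
            (Finset.prod_nonneg fun i _ => by linarith [(hd i).2])
        have hm : 0 < (M.submatrix (fun i : s => (i : Fin n))
            (fun i : s => (i : Fin n))).det := by
          rcases s.eq_empty_or_nonempty with rfl | hne
          · have : IsEmpty {x : Fin n // x ∈ (∅ : Finset (Fin n))} := by
              constructor; rintro ⟨x, hx⟩; simp at hx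
            rw [Matrix.det_isEmpty]; norm_num
          · exact hP s hne
        exact mul_nonneg hw hm.le
      have hone := weights_sum_one d
      by_contra hle
      push_neg at hle
      have hzero := (Finset.sum_eq_zero_iff_of_nonneg
          (s := (Finset.univ : Finset (Finset (Fin n)))) (fun s _ => hterm s)).mp
        (le_antisymm hle (Finset.sum_nonneg fun s _ => hterm s))
      -- derive each weight is zero times positive minor, so weight*minor=0 ⇒ contradiction with sum = 1
      have : ∀ s : Finset (Fin n), (∏ i ∈ s, d i) * ∏ i ∈ sᶜ, (1 - d i) = 0 := by
        intro s
        have hm : 0 < (M.submatrix (fun i : s => (i : Fin n))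
            (fun i : s => (i : Fin n))).det := by
          rcases s.eq_empty_or_nonempty with rfl | hne
          · have : IsEmpty {x : Fin n // x ∈ (∅ : Finset (Fin n))} := by
              constructor; rintro ⟨x, hx⟩; simp at hx
            rw [Matrix.det_isEmpty]; norm_num
          · exact hP s hne
        have h0 := hzero s (Finset.mem_univ s)

        exact (mul_eq_zero.mp h0).resolve_right hm.ne'
      rw [Finset.sum_congr rfl fun s _ => this s, Finset.sum_const_zero] at hone
      norm_num at hone
    exact hpos.ne'
  · intro h
    intro s hs
    by_contra hle
    push_neg at hle
    -- consider f t = det at d = t · indicator s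
    set dd : ℝ → Fin n → ℝ := fun t i => if i ∈ s then t else 0 with hdd
    set f : ℝ → ℝ := fun t =>
      (M * Matrix.diagonal (dd t) + 1 - Matrix.diagonal (dd t)).det with hf
    have hf0 : f 0 = 1 := by
      simp [f, dd, Matrix.diagonal_zero]
    have hf1 : f 1 = (M.submatrix (fun i : s => (i : Fin n))
        (fun i : s => (i : Fin n))).det := by
      rw [hf]
      simp only
      rw [det_expand]
      rw [Finset.sum_eq_single s]
      · have h1 : (∏ i ∈ s, dd 1 i) = 1 :=
          Finset.prod_eq_one fun i hi => by simp [dd, hi]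
        have h2 : (∏ i ∈ sᶜ, (1 - dd 1 i)) = 1 :=
          Finset.prod_eq_one fun i hi => by simp [dd, Finset.mem_compl.mp hi]
        rw [h1, h2]; ring
      · intro t _ hts
        by_cases hsub : t ⊆ s
        · obtain ⟨i, his, hit⟩ := Finset.exists_of_ssubset (hsub.ssubset_of_ne hts)
          have hz : (∏ i ∈ tᶜ, (1 - dd 1 i)) = 0 :=
            Finset.prod_eq_zero (Finset.mem_compl.mpr hit) (by simp [dd, his])
          rw [hz]; ring
        · obtain ⟨i, hit, his⟩ := Finset.not_subset.mp hsub
          have hz : (∏ i ∈ t, dd 1 i) = 0 :=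
            Finset.prod_eq_zero hit (by simp [dd, his])
          rw [hz]; ring
      · intro hnot; exact absurd (Finset.mem_univ s) hnot
    have hcont : Continuous f := by
      apply Continuous.matrix_det
      apply continuous_matrix
      intro i j
      simp only [Matrix.sub_apply, Matrix.add_apply, Matrix.mul_apply,
        Matrix.diagonal_apply, Matrix.one_apply, dd]
      apply Continuous.sub
      · apply Continuous.add
        · apply continuous_finset_sum
          intro x _
          by_cases hxj : x = j
          · subst hxj
            by_cases hx : x ∈ s <;> simp only [hx, if_true, if_false, mul_zero] <;> fun_prop
          · simp only [hxj, if_false, mul_zero]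
            fun_prop
        · exact continuous_const
      · by_cases hij : i = j
        · subst hij
          by_cases hjs : i ∈ s <;> simp only [hjs, if_true, if_false] <;> fun_prop
        · simp only [hij, if_false]
          fun_prop
    have hmem : (0:ℝ) ∈ Set.Icc (f 1) (f 0) := by
      rw [hf0, hf1]
      exact ⟨hle, zero_le_one⟩
    obtain ⟨t, ht, hft⟩ := intermediate_value_Icc' (by norm_num : (0:ℝ) ≤ 1)
      hcont.continuousOn hmem
    have hdmem : ∀ i, dd t i ∈ Set.Icc (0:ℝ) 1 := by
      intro i
      by_cases hi : i ∈ s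
      · simpa [dd, hi] using ht
      · simp only [dd, hi, if_false]
        constructor <;> norm_num
    have := h (dd t) hdmem
    rw [Matrix.isUnit_iff_isUnit_det, isUnit_iff_ne_zero] at this
    exact this hft
end

section
/- Let A, B ∈ ℝ^{n×n}. The GAVE Ax + B|x| = b has a unique solution for every b ∈ ℝ^n if and only if A + B − 2BD is nonsingular for every diagonal matrix D = diag(d_i) with 0 ≤ d_i ≤ 1. -/
open Matrix

namespace GAVEAux

variable {n m : ℕ}

/-- squared euclidean norm -/
def qn {n : ℕ} (z : Fin n → ℝ) : ℝ := ∑ i, z i ^ 2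

lemma qn_nonneg (z : Fin n → ℝ) : 0 ≤ qn z := Finset.sum_nonneg fun i _ => sq_nonneg _

lemma sq_le_qn (z : Fin n → ℝ) (k : Fin n) : z k ^ 2 ≤ qn z :=
  Finset.single_le_sum (f := fun i => z i ^ 2) (fun i _ => sq_nonneg _) (Finset.mem_univ k)

lemma qn_pos {z : Fin n → ℝ} (hz : z ≠ 0) : 0 < qn z := by
  obtain ⟨k, hk⟩ := Function.ne_iff.mp hz
  have h : 0 < z k ^ 2 := by
    have : z k ≠ 0 := hk
    positivity
  exact lt_of_lt_of_le h (sq_le_qn z k)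

def PropS {n : ℕ} (M : Matrix (Fin n) (Fin n) ℝ) : Prop :=
  ∀ z : Fin n → ℝ, z ≠ 0 → ∃ k, 0 < z k * (M *ᵥ z) k

def SolLCP {n : ℕ} (M : Matrix (Fin n) (Fin n) ℝ) (q z : Fin n → ℝ) : Prop :=
  (∀ k, 0 ≤ z k) ∧ (∀ k, 0 ≤ (M *ᵥ z + q) k) ∧ ∀ k, z k * (M *ᵥ z + q) k = 0

lemma continuous_mulVec_apply (M : Matrix (Fin n) (Fin n) ℝ) (k : Fin n) :
    Continuous fun z : Fin n → ℝ => (M *ᵥ z) k := by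
  simp only [Matrix.mulVec, dotProduct]
  exact continuous_finset_sum _ fun j _ => continuous_const.mul (continuous_apply j)

lemma coercive (M : Matrix (Fin (m+1)) (Fin (m+1)) ℝ) (hS : PropS M) :
    ∃ c : ℝ, 0 < c ∧ ∀ z : Fin (m+1) → ℝ, ∃ k, c * qn z ≤ z k * (M *ᵥ z) k := by
  have hqn_cont : Continuous (qn : (Fin (m+1) → ℝ) → ℝ) :=
    continuous_finset_sum _ fun i _ => (continuous_apply i).pow 2
  have hclosed : IsClosed {z : Fin (m+1) → ℝ | qn z = 1} :=
    isClosed_eq hqn_cont continuous_const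
  have hbdd : Bornology.IsBounded {z : Fin (m+1) → ℝ | qn z = 1} := by
    apply Bornology.IsBounded.subset (Metric.isBounded_closedBall
      (x := (0 : Fin (m+1) → ℝ)) (r := 1))
    intro z hz
    rw [Metric.mem_closedBall, dist_pi_le_iff zero_le_one]
    intro i
    have h2 : z i ^ 2 ≤ 1 := by
      have := sq_le_qn z i
      rw [Set.mem_setOf_eq] at hz
      linarith [hz ▸ this]
    rw [Pi.zero_apply, Real.dist_eq, sub_zero]
    nlinarith [abs_nonneg (z i), sq_abs (z i)]
  have hcompact := Metric.isCompact_of_isClosed_isBounded hclosed hbdd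
  have hne : ∃ z : Fin (m+1) → ℝ, qn z = 1 := by
    refine ⟨Pi.single 0 1, ?_⟩
    simp [qn, Pi.single_apply]
  obtain ⟨e, he⟩ := hne
  set g : (Fin (m+1) → ℝ) → ℝ :=
    fun z => Finset.univ.sup' Finset.univ_nonempty (fun k => z k * (M *ᵥ z) k) with hg
  have hgcont : Continuous g :=
    Continuous.finset_sup'_apply Finset.univ_nonempty
      (fun k _ => (continuous_apply k).mul (continuous_mulVec_apply M k))
  obtain ⟨z₀, hz₀S, hmin⟩ := hcompact.exists_isMinOn ⟨e, he⟩ hgcont.continuousOn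
  rw [Set.mem_setOf_eq] at hz₀S
  have hz₀ne : z₀ ≠ 0 := by
    intro h
    rw [h] at hz₀S
    simp [qn] at hz₀S
  obtain ⟨k₀, hk₀⟩ := hS z₀ hz₀ne
  have hcpos : 0 < g z₀ :=
    lt_of_lt_of_le hk₀ (Finset.le_sup' (fun k => z₀ k * (M *ᵥ z₀) k) (Finset.mem_univ k₀))
  refine ⟨g z₀, hcpos, ?_⟩
  intro z
  by_cases hz0 : z = 0
  · refine ⟨0, ?_⟩
    subst hz0
    simp [qn, Matrix.mulVec_zero]
  · set r := Real.sqrt (qn z) with hrdef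
    have hqz : 0 < qn z := qn_pos hz0
    have hr : 0 < r := Real.sqrt_pos.mpr hqz
    have hr2 : r ^ 2 = qn z := Real.sq_sqrt (qn_nonneg z)
    have hzS : qn (r⁻¹ • z) = 1 := by
      have : qn (r⁻¹ • z) = r⁻¹ ^ 2 * qn z := by
        simp only [qn, Pi.smul_apply, smul_eq_mul, mul_pow, Finset.mul_sum]
      rw [this, ← hr2]
      field_simp
    have hle : g z₀ ≤ g (r⁻¹ • z) := hmin hzS
    obtain ⟨k, -, hk⟩ :=
      Finset.exists_mem_eq_sup' Finset.univ_nonempty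
        (fun k => (r⁻¹ • z) k * (M *ᵥ (r⁻¹ • z)) k)
    replace hle : g z₀ ≤ (r⁻¹ • z) k * (M *ᵥ (r⁻¹ • z)) k := le_of_le_of_eq hle hk
    have hsm : (M *ᵥ (r⁻¹ • z)) k = r⁻¹ * (M *ᵥ z) k := by
      rw [Matrix.mulVec_smul]
      simp
    rw [hsm] at hle
    simp only [Pi.smul_apply, smul_eq_mul] at hle
    refine ⟨k, ?_⟩
    have hrne : r ≠ 0 := hr.ne'
    have : g z₀ * r ^ 2 ≤ r⁻¹ * z k * (r⁻¹ * (M *ᵥ z) k) * r ^ 2 :=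
      mul_le_mul_of_nonneg_right hle (sq_nonneg r)
    calc g z₀ * qn z = g z₀ * r ^ 2 := by rw [hr2]
      _ ≤ r⁻¹ * z k * (r⁻¹ * (M *ᵥ z) k) * r ^ 2 := this
      _ = z k * (M *ᵥ z) k * (r⁻¹ * r) ^ 2 := by ring
      _ = z k * (M *ᵥ z) k := by rw [inv_mul_cancel₀ hrne]; ring


lemma lcp_dist (M : Matrix (Fin n) (Fin n) ℝ) (hS : PropS M) :
    ∃ C : ℝ, 0 ≤ C ∧ ∀ q1 q2 z1 z2, SolLCP M q1 z1 → SolLCP M q2 z2 →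
      qn (z1 - z2) ≤ C * qn (q1 - q2) := by
  obtain _ | m := n
  · refine ⟨0, le_rfl, ?_⟩
    intro q1 q2 z1 z2 _ _
    simp [qn]
  · obtain ⟨c, hc, hco⟩ := coercive M hS
    refine ⟨1 / c ^ 2, by positivity, ?_⟩
    intro q1 q2 z1 z2 h1 h2
    obtain ⟨k, hk⟩ := hco (z1 - z2)
    have hw : (z1 - z2) k * ((M *ᵥ z1 + q1) k - (M *ᵥ z2 + q2) k) ≤ 0 := by
      have e1 := h1.2.2 k
      have e2 := h2.2.2 k
      have p1 := h1.1 k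
      have p2 := h2.1 k
      have w1 := h1.2.1 k
      have w2 := h2.2.1 k
      simp only [Pi.sub_apply]
      nlinarith
    have hMd : (z1 - z2) k * (M *ᵥ (z1 - z2)) k
        = (z1 - z2) k * ((M *ᵥ z1 + q1) k - (M *ᵥ z2 + q2) k)
          - (z1 - z2) k * (q1 - q2) k := by
      rw [Matrix.mulVec_sub]
      simp only [Pi.sub_apply, Pi.add_apply]
      ring
    set d := z1 - z2 with hd
    have h4 : c * qn d ≤ - (d k * (q1 - q2) k) := by
      rw [hMd] at hk
      nlinarith
    have h5 : (c * qn d) ^ 2 ≤ d k ^ 2 * (q1 - q2) k ^ 2 := by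
      nlinarith [mul_nonneg hc.le (qn_nonneg d), h4, sq_nonneg (c * qn d + d k * (q1 - q2) k)]
    have h6 : d k ^ 2 * (q1 - q2) k ^ 2 ≤ qn d * qn (q1 - q2) :=
      mul_le_mul (sq_le_qn d k) (sq_le_qn (q1 - q2) k) (sq_nonneg _) (qn_nonneg _)
    by_cases hdz : qn d = 0
    · rw [hdz]
      have := qn_nonneg (q1 - q2)
      positivity
    · have hdpos : 0 < qn d := lt_of_le_of_ne (qn_nonneg d) (Ne.symm hdz)
      rw [div_mul_eq_mul_div, le_div_iff₀ (by positivity)]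
      nlinarith

lemma propS_submatrix (M : Matrix (Fin (m+1)) (Fin (m+1)) ℝ) (hS : PropS M) :
    PropS (M.submatrix Fin.castSucc Fin.castSucc) := by
  intro z hz
  set zh : Fin (m+1) → ℝ := Fin.snoc z 0 with hzh
  have hzhne : zh ≠ 0 := by
    intro h
    apply hz
    funext j
    have : zh (Fin.castSucc j) = 0 := by rw [h]; rfl
    rwa [hzh, Fin.snoc_castSucc] at this
  obtain ⟨k, hk⟩ := hS zh hzhne
  have hklast : k ≠ Fin.last m := by
    intro h
    rw [h, hzh, Fin.snoc_last] at hk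
    simp at hk
  obtain ⟨j, rfl⟩ := Fin.exists_castSucc_eq.mpr hklast
  refine ⟨j, ?_⟩
  have hmv : (M *ᵥ zh) (Fin.castSucc j)
      = ((M.submatrix Fin.castSucc Fin.castSucc) *ᵥ z) j := by
    simp only [Matrix.mulVec, dotProduct, Matrix.submatrix_apply]
    rw [Fin.sum_univ_castSucc]
    simp [hzh, Fin.snoc_castSucc, Fin.snoc_last]
  rw [hmv, hzh, Fin.snoc_castSucc] at hk
  exact hk


lemma lcp_exists : ∀ (n : ℕ) (M : Matrix (Fin n) (Fin n) ℝ), PropS M →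
    ∀ q : Fin n → ℝ, ∃ z, SolLCP M q z := by
  intro n
  induction n with
  | zero =>
    intro M _ q
    exact ⟨0, fun k => k.elim0, fun k => k.elim0, fun k => k.elim0⟩
  | succ m ih =>
    intro M hS q
    set l : Fin (m+1) := Fin.last m with hl
    set M' := M.submatrix Fin.castSucc Fin.castSucc with hM'
    have hS' : PropS M' := propS_submatrix M hS
    set q' : ℝ → Fin m → ℝ := fun t j => q j.castSucc + t * M j.castSucc l with hq'
    have hex := fun t : ℝ => ih M' hS' (q' t)
    choose zf hzf using hex
    set Z : ℝ → Fin (m+1) → ℝ := fun t => Fin.snoc (zf t) t with hZ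
    have hZcs : ∀ (t : ℝ) (j : Fin m), Z t (Fin.castSucc j) = zf t j := by
      intro t j; simp [hZ, Fin.snoc_castSucc]
    have hZl : ∀ t : ℝ, Z t l = t := by
      intro t; simp [hZ, hl, Fin.snoc_last]
    have hcs : ∀ (t : ℝ) (j : Fin m),
        (M *ᵥ Z t + q) (Fin.castSucc j) = (M' *ᵥ zf t + q' t) j := by
      intro t j
      simp only [Pi.add_apply, Matrix.mulVec, dotProduct, hM', Matrix.submatrix_apply]
      rw [Fin.sum_univ_castSucc]
      simp only [hZ, Fin.snoc_castSucc, Fin.snoc_last, hq']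
      ring
    set h : ℝ → ℝ := fun t => (M *ᵥ Z t + q) l with hh
    obtain ⟨c, hc, hco⟩ := coercive M hS
    have hgrow : ∀ t1 t2 : ℝ, t1 < t2 → c * (t2 - t1) ≤ h t2 - h t1 := by
      intro t1 t2 hlt
      obtain ⟨k, hk⟩ := hco (Z t2 - Z t1)
      have hdl : (Z t2 - Z t1) l = t2 - t1 := by
        simp [Pi.sub_apply, hZl]
      have hqd : (t2 - t1) ^ 2 ≤ qn (Z t2 - Z t1) := by
        have := sq_le_qn (Z t2 - Z t1) l
        rwa [hdl] at this
      have hMd : ∀ k', (M *ᵥ (Z t2 - Z t1)) k' = (M *ᵥ Z t2 + q) k' - (M *ᵥ Z t1 + q) k' := by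
        intro k'; rw [Matrix.mulVec_sub]; simp
      rcases Fin.eq_castSucc_or_eq_last k with ⟨j, rfl⟩ | rfl
      · exfalso
        have e2 := (hzf t2).2.2 j
        have e1 := (hzf t1).2.2 j
        have p2 := (hzf t2).1 j
        have p1 := (hzf t1).1 j
        have w2 := (hzf t2).2.1 j
        have w1 := (hzf t1).2.1 j
        have hz2 : (Z t2 - Z t1) (Fin.castSucc j) = zf t2 j - zf t1 j := by
          simp [Pi.sub_apply, hZcs]
        rw [hMd, hcs t2 j, hcs t1 j, hz2] at hk
        have hqdpos : 0 < qn (Z t2 - Z t1) :=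
          lt_of_lt_of_le (pow_pos (sub_pos.mpr hlt) 2) hqd
        nlinarith [mul_pos hc hqdpos]
      · rw [hMd, hdl] at hk
        have h2 : c * (t2 - t1) ^ 2 ≤ (t2 - t1) * (h t2 - h t1) := by
          calc c * (t2 - t1) ^ 2 ≤ c * qn (Z t2 - Z t1) := by nlinarith
            _ ≤ (t2 - t1) * (h t2 - h t1) := hk
        nlinarith [sub_pos.mpr hlt]
    obtain ⟨C, hC0, hC⟩ := lcp_dist M' hS'
    set R : ℝ := ∑ j : Fin m, M (Fin.castSucc j) l ^ 2 with hR
    have hR0 : 0 ≤ R := Finset.sum_nonneg fun j _ => sq_nonneg _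
    have hzfd : ∀ t s : ℝ, qn (zf t - zf s) ≤ C * R * (t - s) ^ 2 := by
      intro t s
      have h1 := hC (q' t) (q' s) (zf t) (zf s) (hzf t) (hzf s)
      have h2 : qn (q' t - q' s) = R * (t - s) ^ 2 := by
        simp only [qn, hq', Pi.sub_apply, hR, Finset.sum_mul]
        apply Finset.sum_congr rfl
        intro j _
        ring
      rw [h2] at h1
      calc qn (zf t - zf s) ≤ C * (R * (t - s) ^ 2) := h1
        _ = C * R * (t - s) ^ 2 := by ring
    have hdiff : ∀ t s : ℝ, h t - h s
        = (∑ j : Fin m, M l (Fin.castSucc j) * (zf t j - zf s j)) + M l l * (t - s) := by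
      intro t s
      have hform : ∀ u : ℝ, h u = (∑ j : Fin m, M l (Fin.castSucc j) * zf u j) + M l l * u + q l := by
        intro u
        simp only [hh, Pi.add_apply, Matrix.mulVec, dotProduct]
        rw [Fin.sum_univ_castSucc]
        simp [hZ, Fin.snoc_castSucc, Fin.snoc_last, hl]
      have hsplit : ∑ j : Fin m, M l (Fin.castSucc j) * (zf t j - zf s j)
          = (∑ j : Fin m, M l (Fin.castSucc j) * zf t j)
            - ∑ j : Fin m, M l (Fin.castSucc j) * zf s j := by
        rw [← Finset.sum_sub_distrib]
        apply Finset.sum_congr rfl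
        intro j _
        ring
      rw [hform t, hform s, hsplit]
      ring
    set L : ℝ := (∑ j : Fin m, |M l (Fin.castSucc j)|) * Real.sqrt (C * R) + |M l l| with hL
    have hL0 : 0 ≤ L := by positivity
    have hLb : ∀ t s : ℝ, |h t - h s| ≤ L * |t - s| := by
      intro t s
      rw [hdiff t s]
      have hb : ∀ j : Fin m, |zf t j - zf s j| ≤ Real.sqrt (C * R) * |t - s| := by
        intro j
        have h1 : (zf t j - zf s j) ^ 2 ≤ C * R * (t - s) ^ 2 := by
          have := sq_le_qn (zf t - zf s) j
          simp only [Pi.sub_apply] at this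
          exact le_trans this (hzfd t s)
        calc |zf t j - zf s j| ≤ Real.sqrt (C * R * (t - s) ^ 2) := Real.abs_le_sqrt h1
          _ = Real.sqrt (C * R) * |t - s| := by
              rw [Real.sqrt_mul (by positivity), Real.sqrt_sq_eq_abs]
      calc |(∑ j : Fin m, M l (Fin.castSucc j) * (zf t j - zf s j)) + M l l * (t - s)|
          ≤ |∑ j : Fin m, M l (Fin.castSucc j) * (zf t j - zf s j)| + |M l l * (t - s)| :=
            abs_add_le _ _
        _ ≤ (∑ j : Fin m, |M l (Fin.castSucc j) * (zf t j - zf s j)|) + |M l l| * |t - s| := by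
            apply add_le_add (Finset.abs_sum_le_sum_abs _ _) (le_of_eq (abs_mul _ _))
        _ ≤ (∑ j : Fin m, |M l (Fin.castSucc j)| * (Real.sqrt (C * R) * |t - s|))
              + |M l l| * |t - s| := by
            apply add_le_add_left
            apply Finset.sum_le_sum
            intro j _
            rw [abs_mul]
            exact mul_le_mul_of_nonneg_left (hb j) (abs_nonneg _)
        _ = L * |t - s| := by
            rw [hL, ← Finset.sum_mul]
            ring
    have hhcont : Continuous h := by
      apply LipschitzWith.continuous (K := Real.toNNReal L)
      rw [lipschitzWith_iff_dist_le_mul]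
      intro t s
      rw [Real.dist_eq, Real.dist_eq, Real.coe_toNNReal L hL0]
      exact hLb t s
    by_cases h00 : 0 ≤ h 0
    · refine ⟨Z 0, ?_, ?_, ?_⟩
      · intro k
        rcases Fin.eq_castSucc_or_eq_last k with ⟨j, rfl⟩ | rfl
        · rw [hZcs]; exact (hzf 0).1 j
        · rw [hZl]
      · intro k
        rcases Fin.eq_castSucc_or_eq_last k with ⟨j, rfl⟩ | rfl
        · rw [hcs 0 j]; exact (hzf 0).2.1 j
        · exact h00
      · intro k
        rcases Fin.eq_castSucc_or_eq_last k with ⟨j, rfl⟩ | rfl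
        · rw [hcs 0 j, hZcs]; exact (hzf 0).2.2 j
        · rw [hZl]; ring
    · push_neg at h00
      set T : ℝ := (1 - h 0) / c with hT
      have hT0 : 0 < T := div_pos (by linarith) hc
      have hhT : 0 < h T := by
        have hg := hgrow 0 T hT0
        have hcT : c * T = 1 - h 0 := by
          rw [hT]; field_simp
        nlinarith
      obtain ⟨t0, ht0mem, ht0⟩ :=
        intermediate_value_Icc hT0.le hhcont.continuousOn ⟨h00.le, hhT.le⟩
      refine ⟨Z t0, ?_, ?_, ?_⟩
      · intro k
        rcases Fin.eq_castSucc_or_eq_last k with ⟨j, rfl⟩ | rfl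
        · rw [hZcs]; exact (hzf t0).1 j
        · rw [hZl]; exact ht0mem.1
      · intro k
        rcases Fin.eq_castSucc_or_eq_last k with ⟨j, rfl⟩ | rfl
        · rw [hcs t0 j]; exact (hzf t0).2.1 j
        · exact le_of_eq ht0.symm
      · intro k
        rcases Fin.eq_castSucc_or_eq_last k with ⟨j, rfl⟩ | rfl
        · rw [hcs t0 j, hZcs]; exact (hzf t0).2.2 j
        · have : (M *ᵥ Z t0 + q) l = 0 := ht0
          rw [this]; ring


/-- the cube hypothesis in `δ` form. -/
def HypH {n : ℕ} (A B : Matrix (Fin n) (Fin n) ℝ) : Prop :=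
  ∀ δ : Fin n → ℝ, (∀ i, |δ i| ≤ 1) → IsUnit (A + B * Matrix.diagonal δ)

lemma gave_unique {A B : Matrix (Fin n) (Fin n) ℝ} (H : HypH A B) {x y : Fin n → ℝ}
    (hxy : A *ᵥ x + B *ᵥ |x| = A *ᵥ y + B *ᵥ |y|) : x = y := by
  set δ : Fin n → ℝ :=
    fun i => if x i = y i then 0 else (|x i| - |y i|) / (x i - y i) with hδ
  have habs : ∀ i, |δ i| ≤ 1 := by
    intro i
    rw [hδ]
    by_cases h : x i = y i
    · simp [h]
    · simp only [h, if_false]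
      rw [abs_div]
      apply div_le_one_of_le₀ (abs_abs_sub_abs_le_abs_sub _ _) (abs_nonneg _)
  have hdiag : Matrix.diagonal δ *ᵥ (x - y) = |x| - |y| := by
    funext i
    rw [Matrix.mulVec_diagonal]
    simp only [Pi.sub_apply, Pi.abs_apply, hδ]
    by_cases h : x i = y i
    · simp [h]
    · simp only [h, if_false]
      rw [div_mul_cancel₀ _ (sub_ne_zero.mpr h)]
  have hzero : (A + B * Matrix.diagonal δ) *ᵥ (x - y) = 0 := by
    have h1 : (A + B * Matrix.diagonal δ) *ᵥ (x - y)
        = (A *ᵥ x + B *ᵥ |x|) - (A *ᵥ y + B *ᵥ |y|) := by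
      rw [Matrix.add_mulVec, ← Matrix.mulVec_mulVec, hdiag,
        Matrix.mulVec_sub, Matrix.mulVec_sub]
      abel
    rw [h1, hxy, sub_self]
  have hinj := Matrix.mulVec_injective_iff_isUnit.mpr (H δ habs)
  have h0 : (A + B * Matrix.diagonal δ) *ᵥ (0 : Fin n → ℝ) = 0 := Matrix.mulVec_zero _
  have := hinj (hzero.trans h0.symm)
  exact sub_eq_zero.mp this

lemma isUnit_sub_of_H {A B : Matrix (Fin n) (Fin n) ℝ} (H : HypH A B) : IsUnit (A - B) := by
  have h := H (fun _ => (-1 : ℝ)) (by intro i; norm_num)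
  have : A + B * Matrix.diagonal (fun _ => (-1 : ℝ)) = A - B := by
    ext i j
    simp only [Matrix.mul_diagonal, Matrix.sub_apply, Matrix.add_apply]
    ring
  rwa [this] at h

lemma propS_of_H {A B : Matrix (Fin n) (Fin n) ℝ} (H : HypH A B) :
    PropS ((A - B)⁻¹ * (A + B)) := by
  have hdet : IsUnit (A - B).det := (Matrix.isUnit_iff_isUnit_det _).mp (isUnit_sub_of_H H)
  have key : (A - B) * ((A - B)⁻¹ * (A + B)) = A + B := by
    rw [← Matrix.mul_assoc, Matrix.mul_nonsing_inv _ hdet, Matrix.one_mul]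
  intro z hz
  by_contra hcon
  push_neg at hcon
  set w : Fin n → ℝ := ((A - B)⁻¹ * (A + B)) *ᵥ z with hwdef
  have hw : (A - B) *ᵥ w = (A + B) *ᵥ z := by
    rw [hwdef, Matrix.mulVec_mulVec, key]
  have hzw : ∀ k, z k * w k ≤ 0 := hcon
  have hvne : z - w ≠ 0 := by
    intro h
    have hzwk : z = w := sub_eq_zero.mp h
    apply hz
    funext k
    have h1 : z k * z k ≤ 0 := by
      have := hzw k
      rwa [← hzwk] at this
    show z k = (0 : ℝ)
    nlinarith [sq_nonneg (z k)]
  set δ : Fin n → ℝ :=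
    fun k => if z k - w k = 0 then 0 else (z k + w k) / (z k - w k) with hδ
  have hzw0 : ∀ k, z k - w k = 0 → z k = 0 ∧ w k = 0 := by
    intro k h
    have h1 : z k = w k := by linarith [sub_eq_zero.mp h]
    have h2 := hzw k
    constructor <;> nlinarith [sq_nonneg (z k)]
  have habs : ∀ i, |δ i| ≤ 1 := by
    intro i
    rw [hδ]
    by_cases h : z i - w i = 0
    · simp [h]
    · simp only [h, if_false]
      rw [abs_div]
      apply div_le_one_of_le₀ _ (abs_nonneg _)
      rw [← Real.sqrt_sq_eq_abs, ← Real.sqrt_sq_eq_abs]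
      apply Real.sqrt_le_sqrt
      nlinarith [hzw i]
  have hdiag : Matrix.diagonal δ *ᵥ (z - w) = z + w := by
    funext k
    rw [Matrix.mulVec_diagonal]
    simp only [Pi.sub_apply, Pi.add_apply, hδ]
    by_cases h : z k - w k = 0
    · obtain ⟨h1, h2⟩ := hzw0 k h
      simp [h, h1, h2]
    · simp only [h, if_false]
      rw [div_mul_cancel₀ _ h]
  have hzero : (A + B * Matrix.diagonal δ) *ᵥ (z - w) = 0 := by
    have h1 : (A + B * Matrix.diagonal δ) *ᵥ (z - w)
        = (A + B) *ᵥ z - (A - B) *ᵥ w := by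
      rw [Matrix.add_mulVec, ← Matrix.mulVec_mulVec, hdiag,
        Matrix.mulVec_sub, Matrix.mulVec_add, Matrix.add_mulVec, Matrix.sub_mulVec]
      abel
    rw [h1, ← hw, sub_self]
  have hinj := Matrix.mulVec_injective_iff_isUnit.mpr (H δ habs)
  have h0 : (A + B * Matrix.diagonal δ) *ᵥ (0 : Fin n → ℝ) = 0 := Matrix.mulVec_zero _
  exact hvne (hinj (hzero.trans h0.symm))

lemma gave_exists {A B : Matrix (Fin n) (Fin n) ℝ} (H : HypH A B) (b : Fin n → ℝ) :
    ∃ x : Fin n → ℝ, A *ᵥ x + B *ᵥ |x| = b := by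
  have hdet : IsUnit (A - B).det := (Matrix.isUnit_iff_isUnit_det _).mp (isUnit_sub_of_H H)
  have key : (A - B) * ((A - B)⁻¹ * (A + B)) = A + B := by
    rw [← Matrix.mul_assoc, Matrix.mul_nonsing_inv _ hdet, Matrix.one_mul]
  obtain ⟨z, hz⟩ := lcp_exists n ((A - B)⁻¹ * (A + B)) (propS_of_H H)
    (-((A - B)⁻¹ *ᵥ b))
  set w : Fin n → ℝ := ((A - B)⁻¹ * (A + B)) *ᵥ z + -((A - B)⁻¹ *ᵥ b) with hwdef
  have hz1 : ∀ k, 0 ≤ z k := hz.1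
  have hz2 : ∀ k, 0 ≤ w k := fun k => hz.2.1 k
  have hz3 : ∀ k, z k * w k = 0 := fun k => hz.2.2 k
  have hABw : (A - B) *ᵥ w = (A + B) *ᵥ z - b := by
    rw [hwdef, Matrix.mulVec_add, Matrix.mulVec_mulVec, key, Matrix.mulVec_neg,
      Matrix.mulVec_mulVec, Matrix.mul_nonsing_inv _ hdet, Matrix.one_mulVec]
    abel
  clear_value w
  clear hwdef hz
  refine ⟨z - w, ?_⟩
  have habs : |z - w| = z + w := by
    funext k
    simp only [Pi.abs_apply, Pi.sub_apply, Pi.add_apply]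
    rcases mul_eq_zero.mp (hz3 k) with h | h
    · rw [h, zero_sub, abs_neg, abs_of_nonneg (hz2 k), zero_add]
    · rw [h, sub_zero, abs_of_nonneg (hz1 k), add_zero]
  rw [habs]
  have h1 : A *ᵥ (z - w) + B *ᵥ (z + w) = (A + B) *ᵥ z - (A - B) *ᵥ w := by
    rw [Matrix.mulVec_sub, Matrix.mulVec_add, Matrix.add_mulVec, Matrix.sub_mulVec]
    abel
  rw [h1, hABw]
  abel


lemma matrix_id (A B : Matrix (Fin n) (Fin n) ℝ) (d : Fin n → ℝ) :
    A + B - (2 : ℝ) • (B * Matrix.diagonal d)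
      = A + B * Matrix.diagonal (fun i => 1 - 2 * d i) := by
  ext i j
  simp only [Matrix.sub_apply, Matrix.add_apply, Matrix.smul_apply, Matrix.mul_diagonal,
    smul_eq_mul]
  ring

lemma H_of_rhs {A B : Matrix (Fin n) (Fin n) ℝ}
    (hr : ∀ d : Fin n → ℝ, (∀ i, d i ∈ Set.Icc (0 : ℝ) 1) →
      IsUnit (A + B - (2 : ℝ) • (B * Matrix.diagonal d))) : HypH A B := by
  intro δ hδ
  have h := hr (fun i => (1 - δ i) / 2) (by
    intro i
    obtain ⟨h1, h2⟩ := abs_le.mp (hδ i)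
    constructor <;> [skip; skip] <;> linarith)
  rw [matrix_id] at h
  have he : (fun i => 1 - 2 * ((1 - δ i) / 2)) = δ := by funext i; ring
  rwa [he] at h


end GAVEAux

theorem stmt8 {n : ℕ} (A B : Matrix (Fin n) (Fin n) ℝ) :
    (∀ b : Fin n → ℝ, ∃! x : Fin n → ℝ, A *ᵥ x + B *ᵥ |x| = b) ↔
      ∀ d : Fin n → ℝ, (∀ i, d i ∈ Set.Icc (0 : ℝ) 1) →
        IsUnit (A + B - (2 : ℝ) • (B * Matrix.diagonal d)) := by
  constructor
  · intro hb d hd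
    rw [GAVEAux.matrix_id]
    obtain ⟨δ, hδ⟩ : ∃ δ : Fin n → ℝ, δ = fun i => 1 - 2 * d i := ⟨_, rfl⟩
    rw [← hδ]
    have hδb : ∀ i, -1 ≤ δ i ∧ δ i ≤ 1 := by
      intro i
      obtain ⟨h1, h2⟩ := Set.mem_Icc.mp (hd i)
      constructor <;> simp only [hδ] <;> linarith
    rw [← Matrix.mulVec_injective_iff_isUnit]
    have hker : ∀ v : Fin n → ℝ, (A + B * Matrix.diagonal δ) *ᵥ v = 0 → v = 0 := by
      intro v hv
      obtain ⟨x, hxdef⟩ : ∃ x : Fin n → ℝ,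
          x = fun i => (1 + δ i * (if 0 ≤ v i then 1 else -1)) * v i / 2 := ⟨_, rfl⟩
      obtain ⟨y, hydef⟩ : ∃ y : Fin n → ℝ, y = x - v := ⟨_, rfl⟩
      have hxy : x - y = v := by rw [hydef]; abel
      have habs : ∀ i, |x i| - |y i| = δ i * v i := by
        intro i
        obtain ⟨hδ1, hδ2⟩ := hδb i
        have hyi : y i = x i - v i := by rw [hydef]; rfl
        by_cases hvi : 0 ≤ v i
        · have hxval : x i = (1 + δ i) * v i / 2 := by
            simp only [hxdef, if_pos hvi]; ring
          have h1 : 0 ≤ x i := by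
            rw [hxval]
            have := mul_nonneg (by linarith : (0:ℝ) ≤ 1 + δ i) hvi
            linarith
          have h2 : y i ≤ 0 := by
            rw [hyi, hxval]
            have := mul_nonneg (by linarith : (0:ℝ) ≤ 1 - δ i) hvi
            linarith
          rw [abs_of_nonneg h1, abs_of_nonpos h2, hyi, hxval]
          ring
        · push_neg at hvi
          have hxval : x i = (1 - δ i) * v i / 2 := by
            simp only [hxdef, if_neg (not_le.mpr hvi)]; ring
          have h1 : x i ≤ 0 := by
            rw [hxval]
            have := mul_nonneg (by linarith : (0:ℝ) ≤ 1 - δ i) (by linarith : (0:ℝ) ≤ -v i)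
            nlinarith
          have h2 : 0 ≤ y i := by
            rw [hyi, hxval]
            have := mul_nonneg (by linarith : (0:ℝ) ≤ 1 + δ i) (by linarith : (0:ℝ) ≤ -v i)
            nlinarith
          rw [abs_of_nonpos h1, abs_of_nonneg h2, hyi, hxval]
          ring
      have hdiag : Matrix.diagonal δ *ᵥ v = |x| - |y| := by
        funext i
        rw [Matrix.mulVec_diagonal]
        simp only [Pi.sub_apply, Pi.abs_apply]
        exact (habs i).symm
      have heq : A *ᵥ y + B *ᵥ |y| = A *ᵥ x + B *ᵥ |x| := by
        have h1 : (A *ᵥ x + B *ᵥ |x|) - (A *ᵥ y + B *ᵥ |y|)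
            = (A + B * Matrix.diagonal δ) *ᵥ v := by
          rw [Matrix.add_mulVec, ← Matrix.mulVec_mulVec, hdiag, ← hxy,
            Matrix.mulVec_sub, Matrix.mulVec_sub]
          abel
        exact (sub_eq_zero.mp (h1.trans hv)).symm
      obtain ⟨xs, hxs, huniq⟩ := hb (A *ᵥ x + B *ᵥ |x|)
      have h1 : x = xs := huniq x rfl
      have h2 : y = xs := huniq y heq
      rw [← hxy, h1, h2, sub_self]
    intro u u' huu'
    have h0 : (A + B * Matrix.diagonal δ) *ᵥ (u - u') = 0 := by
      rw [Matrix.mulVec_sub]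
      rw [show (A + B * Matrix.diagonal δ) *ᵥ u = (A + B * Matrix.diagonal δ) *ᵥ u' from huu']
      rw [sub_self]
    exact sub_eq_zero.mp (hker _ h0)
  · intro hr b
    have H : GAVEAux.HypH A B := GAVEAux.H_of_rhs hr
    obtain ⟨x, hx⟩ := GAVEAux.gave_exists H b
    exact ⟨x, hx, fun y hy => GAVEAux.gave_unique H (hy.trans hx.symm)⟩
end

section
/- If A ∈ ℝ^{n×n} is nonsingular and ρ(A^{-1} D̄) < 1 for every diagonal matrix D̄ with diagonal entries in [−1,1], then the AVE Ax + |x| = b has a unique solution for every b ∈ ℝ^n. -/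
open Matrix

theorem mapC_eq {n : ℕ} (M : Matrix (Fin n) (Fin n) ℝ) :
    M.map Complex.ofReal = Complex.ofRealHom.mapMatrix M := rfl

theorem detC {n : ℕ} (M : Matrix (Fin n) (Fin n) ℝ) :
    (M.map Complex.ofReal).det = (M.det : ℂ) := by
  rw [mapC_eq, ← RingHom.map_det]; rfl

theorem det_add_diag_ne {n : ℕ} (A : Matrix (Fin n) (Fin n) ℝ) (hA : IsUnit A)
    (h : ∀ d : Fin n → ℝ, (∀ i, d i ∈ Set.Icc (-1 : ℝ) 1) →
      specRad (A⁻¹ * Matrix.diagonal d) < 1)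
    (d : Fin n → ℝ) (hd : ∀ i, d i ∈ Set.Icc (-1 : ℝ) 1) :
    (A + Matrix.diagonal d).det ≠ 0 := by
  intro h0
  have hAd : IsUnit A.det := (Matrix.isUnit_iff_isUnit_det A).1 hA
  have key : (A + Matrix.diagonal d) = A * (1 + A⁻¹ * Matrix.diagonal d) := by
    rw [Matrix.mul_add, Matrix.mul_one, ← Matrix.mul_assoc,
      Matrix.mul_nonsing_inv A hAd, Matrix.one_mul]
  have h1 : ((1 + A⁻¹ * Matrix.diagonal d).det : ℝ) = 0 := by
    have : A.det * (1 + A⁻¹ * Matrix.diagonal d).det = 0 := by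
      rw [← Matrix.det_mul, ← key, h0]
    exact (mul_eq_zero.1 this).resolve_left hAd.ne_zero
  -- so -1 is in the spectrum
  have hmem : (-1 : ℂ) ∈ spectrum ℂ ((A⁻¹ * Matrix.diagonal d).map (Complex.ofReal)) := by
    rw [spectrum.mem_iff]
    intro hu
    have hdet := (Matrix.isUnit_iff_isUnit_det _).1 hu
    have heq : (algebraMap ℂ (Matrix (Fin n) (Fin n) ℂ)) (-1) -
        (A⁻¹ * Matrix.diagonal d).map (Complex.ofReal)
        = -((1 + A⁻¹ * Matrix.diagonal d).map (Complex.ofReal)) := by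
      ext i j
      by_cases hij : i = j <;>
        simp [hij, Matrix.map_apply, Matrix.one_apply, Matrix.add_apply,
          Matrix.algebraMap_matrix_apply, Matrix.sub_apply, Matrix.neg_apply] <;> ring
    rw [heq, Matrix.det_neg, detC, h1] at hdet
    simp at hdet
  have hlt := h d hd
  rw [specRad, spectralRadius] at hlt
  have hle : (1 : ENNReal) ≤ ⨆ k ∈ spectrum ℂ ((A⁻¹ * Matrix.diagonal d).map (Complex.ofReal)),
      (‖k‖₊ : ENNReal) := by
    have := le_iSup₂ (f := fun (k : ℂ) (_ : k ∈ spectrum ℂ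
      ((A⁻¹ * Matrix.diagonal d).map (Complex.ofReal))) => (‖k‖₊ : ENNReal)) (-1) hmem
    simpa using this
  exact absurd (lt_of_le_of_lt hle hlt) (lt_irrefl _)


theorem det_sign_const {n : ℕ} (A : Matrix (Fin n) (Fin n) ℝ)
    (hinv : ∀ d : Fin n → ℝ, (∀ i, d i ∈ Set.Icc (-1 : ℝ) 1) →
      (A + Matrix.diagonal d).det ≠ 0)
    (d d' : Fin n → ℝ) (hd : ∀ i, d i ∈ Set.Icc (-1 : ℝ) 1)
    (hd' : ∀ i, d' i ∈ Set.Icc (-1 : ℝ) 1) :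
    0 < (A + Matrix.diagonal d).det * (A + Matrix.diagonal d').det := by
  set f : ℝ → ℝ := fun t => (A + Matrix.diagonal (fun i => (1 - t) * d i + t * d' i)).det with hf
  have hcont : Continuous f := by
    apply Continuous.matrix_det
    apply Continuous.add continuous_const
    apply continuous_matrix
    intro i j
    simp only [Matrix.diagonal_apply]
    by_cases hij : i = j <;> simp [hij] <;> fun_prop
  have hne : ∀ t ∈ Set.Icc (0:ℝ) 1, f t ≠ 0 := by
    intro t ht
    apply hinv
    intro i
    have h1 := (hd i).1; have h2 := (hd i).2
    have h3 := (hd' i).1; have h4 := (hd' i).2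
    have h5 := ht.1; have h6 := ht.2
    constructor <;> nlinarith
  have h0 : f 0 = (A + Matrix.diagonal d).det := by simp [hf]
  have h1 : f 1 = (A + Matrix.diagonal d').det := by simp [hf]
  rcases lt_trichotomy ((A + Matrix.diagonal d).det * (A + Matrix.diagonal d').det) 0 with hlt | heq | hgt
  · exfalso
    have : (0:ℝ) ∈ Set.Icc (f 0) (f 1) ∪ Set.Icc (f 1) (f 0) := by
      rw [h0, h1]
      rcases mul_neg_iff.1 hlt with ⟨ha, hb⟩ | ⟨ha, hb⟩
      · right; exact ⟨hb.le, ha.le⟩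
      · left; exact ⟨ha.le, hb.le⟩
    rcases this with hm | hm
    · obtain ⟨t, ht, hft⟩ := intermediate_value_Icc (by norm_num : (0:ℝ) ≤ 1)
        (hcont.continuousOn) hm
      exact hne t ht hft
    · obtain ⟨t, ht, hft⟩ := intermediate_value_Icc' (by norm_num : (0:ℝ) ≤ 1)
        (hcont.continuousOn) hm
      exact hne t ht hft
  · exfalso
    rcases mul_eq_zero.1 heq with hc | hc
    · exact hinv d hd hc
    · exact hinv d' hd' hc
  · exact hgt


section helpers
variable {n : ℕ}

theorem mulVec_inj (M : Matrix (Fin n) (Fin n) ℝ) (h : M.det ≠ 0) :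
    Function.Injective (M.mulVec) :=
  Matrix.mulVec_injective_iff_isUnit.2 ((Matrix.isUnit_iff_isUnit_det M).2 (isUnit_iff_ne_zero.2 h))

theorem mulVec_continuous (M : Matrix (Fin n) (Fin n) ℝ) : Continuous (M.mulVec) := by
  have : (M.mulVec) = fun v => M *ᵥ v := rfl
  continuity

theorem mulVec_inv_cancel (M : Matrix (Fin n) (Fin n) ℝ) (h : M.det ≠ 0) (y : Fin n → ℝ) :
    M *ᵥ (M⁻¹ *ᵥ y) = y := by
  rw [Matrix.mulVec_mulVec, Matrix.mul_nonsing_inv M (isUnit_iff_ne_zero.2 h), Matrix.one_mulVec]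

theorem inv_mulVec_cancel (M : Matrix (Fin n) (Fin n) ℝ) (h : M.det ≠ 0) (x : Fin n → ℝ) :
    M⁻¹ *ᵥ (M *ᵥ x) = x := by
  rw [Matrix.mulVec_mulVec, Matrix.nonsing_inv_mul M (isUnit_iff_ne_zero.2 h), Matrix.one_mulVec]

/-- ±1 vector associated to a sign pattern. -/
def dsg (s : Fin n → Bool) : Fin n → ℝ := fun i => if s i then 1 else -1

theorem dsg_box (s : Fin n → Bool) : ∀ i, dsg s i ∈ Set.Icc (-1 : ℝ) 1 := by
  intro i; unfold dsg; by_cases h : s i <;> simp [h]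

theorem abs_eq_dsg_mul {s : Fin n → Bool} {v : Fin n → ℝ} (hv : ∀ j, 0 ≤ dsg s j * v j) :
    ∀ j, |v j| = dsg s j * v j := by
  intro j
  have := hv j
  unfold dsg at *
  by_cases hj : s j
  · simp only [hj, if_true, one_mul] at this ⊢
    exact abs_of_nonneg this
  · simp only [hj, if_false, Bool.false_eq_true, neg_one_mul] at this ⊢
    rw [abs_of_nonpos (by linarith)]

theorem ave_eq_on_orth (A : Matrix (Fin n) (Fin n) ℝ) {s : Fin n → Bool} {v : Fin n → ℝ}
    (hv : ∀ j, 0 ≤ dsg s j * v j) :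
    A *ᵥ v + |v| = (A + Matrix.diagonal (dsg s)) *ᵥ v := by
  rw [Matrix.add_mulVec]
  congr 1
  funext j
  rw [Pi.abs_apply, abs_eq_dsg_mul hv j, Matrix.mulVec_diagonal]

/-- Cramer representation of coordinates of the inverse-solution. -/
theorem cramer_coord (M : Matrix (Fin n) (Fin n) ℝ) (h : M.det ≠ 0) (y : Fin n → ℝ) (i : Fin n) :
    (M.updateCol i y).det = M.det * (M⁻¹ *ᵥ y) i := by
  have h1 : M *ᵥ Matrix.cramer M y = M.det • y := Matrix.mulVec_cramer M y
  have h2 : Matrix.cramer M y = M.det • (M⁻¹ *ᵥ y) := by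
    apply mulVec_inj M h
    rw [h1, Matrix.mulVec_smul, mulVec_inv_cancel M h]
  have := congrFun h2 i
  rw [Matrix.cramer_apply] at this
  simpa [mul_comm] using this

end helpers

theorem local_surj_wall {n : ℕ} (A : Matrix (Fin n) (Fin n) ℝ)
    (hinv : ∀ d : Fin n → ℝ, (∀ i, d i ∈ Set.Icc (-1 : ℝ) 1) →
      (A + Matrix.diagonal d).det ≠ 0)
    (hsign : ∀ d d' : Fin n → ℝ, (∀ i, d i ∈ Set.Icc (-1 : ℝ) 1) →
      (∀ i, d' i ∈ Set.Icc (-1 : ℝ) 1) →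
      0 < (A + Matrix.diagonal d).det * (A + Matrix.diagonal d').det)
    (x : Fin n → ℝ) (i₀ : Fin n) (hx0 : x i₀ = 0) (hx : ∀ j, j ≠ i₀ → x j ≠ 0) :
    ∀ᶠ y in nhds (A *ᵥ x + |x|), ∃ z, A *ᵥ z + |z| = y := by
  set s : Fin n → Bool := fun j => if j = i₀ then true else decide (0 ≤ x j) with hs
  set s' : Fin n → Bool := fun j => if j = i₀ then false else decide (0 ≤ x j) with hs'
  set B₁ := A + Matrix.diagonal (dsg s) with hB₁
  set B₂ := A + Matrix.diagonal (dsg s') with hB₂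
  have hdet₁ : B₁.det ≠ 0 := hinv _ (dsg_box s)
  have hdet₂ : B₂.det ≠ 0 := hinv _ (dsg_box s')
  have hpos : 0 < B₁.det * B₂.det := hsign _ _ (dsg_box s) (dsg_box s')
  -- x is in both orthants
  have horth : ∀ (t : Fin n → Bool), (∀ j, j ≠ i₀ → t j = decide (0 ≤ x j)) →
      ∀ j, 0 ≤ dsg t j * x j := by
    intro t ht j
    by_cases hj : j = i₀
    · subst hj; rw [hx0, mul_zero]
    · unfold dsg
      rw [ht j hj]
      by_cases hj2 : 0 ≤ x j <;> simp [hj2]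
      linarith [not_le.1 hj2]
  have hxs : ∀ j, 0 ≤ dsg s j * x j := horth s (fun j hj => by simp [hs, hj])
  have hxs' : ∀ j, 0 ≤ dsg s' j * x j := horth s' (fun j hj => by simp [hs', hj])
  have hb1 : A *ᵥ x + |x| = B₁ *ᵥ x := ave_eq_on_orth A hxs
  have hb2 : A *ᵥ x + |x| = B₂ *ᵥ x := ave_eq_on_orth A hxs'
  -- the two matrices agree off column i₀
  have hupd : ∀ y : Fin n → ℝ, (B₁.updateCol i₀ y).det = (B₂.updateCol i₀ y).det := by
    intro y
    congr 1
    ext j k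
    rw [Matrix.updateCol_apply, Matrix.updateCol_apply]
    by_cases hk : k = i₀
    · simp [hk]
    · simp only [hk, if_false]
      rw [hB₁, hB₂]
      simp only [Matrix.add_apply, Matrix.diagonal_apply]
      congr 1
      by_cases hjk : j = k
      · subst hjk
        simp only [if_pos rfl]
        unfold dsg
        have : s j = s' j := by simp [hs, hs', hk]
        rw [this]
      · simp [hjk]
  -- same-sign relation at coordinate i₀
  have hrel : ∀ y : Fin n → ℝ, 0 ≤ (B₁⁻¹ *ᵥ y) i₀ * (B₂⁻¹ *ᵥ y) i₀ := by
    intro y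
    have e1 := cramer_coord B₁ hdet₁ y i₀
    have e2 := cramer_coord B₂ hdet₂ y i₀
    have e : B₁.det * (B₁⁻¹ *ᵥ y) i₀ = B₂.det * (B₂⁻¹ *ᵥ y) i₀ := by
      rw [← e1, ← e2, hupd]
    have key : (B₁⁻¹ *ᵥ y) i₀ * (B₂⁻¹ *ᵥ y) i₀ * (B₁.det * B₂.det)
        = (B₁.det * (B₁⁻¹ *ᵥ y) i₀) * (B₂.det * (B₂⁻¹ *ᵥ y) i₀) := by ring
    rw [← e] at key
    have h2 : 0 ≤ (B₁⁻¹ *ᵥ y) i₀ * (B₂⁻¹ *ᵥ y) i₀ * (B₁.det * B₂.det) :=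
      key ▸ mul_self_nonneg _
    exact le_of_not_gt fun hlt => absurd h2 (not_le.2 (mul_neg_of_neg_of_pos hlt hpos))
  -- the open neighbourhood
  set V : Set (Fin n → ℝ) := ⋂ j, {y | j ≠ i₀ →
      (0 < dsg s j * (B₁⁻¹ *ᵥ y) j ∧ 0 < dsg s' j * (B₂⁻¹ *ᵥ y) j)} with hV
  have hVopen : IsOpen V := by
    apply isOpen_iInter_of_finite
    intro j
    by_cases hj : j = i₀
    · simp only [hj]
      convert isOpen_univ using 1
      ext y; simp
    · have : {y : Fin n → ℝ | j ≠ i₀ →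
          (0 < dsg s j * (B₁⁻¹ *ᵥ y) j ∧ 0 < dsg s' j * (B₂⁻¹ *ᵥ y) j)}
          = {y | 0 < dsg s j * (B₁⁻¹ *ᵥ y) j} ∩ {y | 0 < dsg s' j * (B₂⁻¹ *ᵥ y) j} := by
        ext y; simp [hj]
      rw [this]
      have c1 : Continuous fun y => dsg s j * (B₁⁻¹ *ᵥ y) j :=
        continuous_const.mul ((continuous_apply j).comp (mulVec_continuous B₁⁻¹))
      have c2 : Continuous fun y => dsg s' j * (B₂⁻¹ *ᵥ y) j :=
        continuous_const.mul ((continuous_apply j).comp (mulVec_continuous B₂⁻¹))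
      exact (isOpen_lt continuous_const c1).inter (isOpen_lt continuous_const c2)
  have hstrict : ∀ j, j ≠ i₀ → ∀ (t : Fin n → Bool), (∀ k, k ≠ i₀ → t k = decide (0 ≤ x k)) →
      0 < dsg t j * x j := by
    intro j hj t ht
    have h0 := horth t ht j
    rcases h0.lt_or_eq with h | h
    · exact h
    · exfalso
      have hne : dsg t j ≠ 0 := by unfold dsg; by_cases hjt : t j <;> simp [hjt]
      rcases mul_eq_zero.1 h.symm with hc | hc
      · exact hne hc
      · exact hx j hj hc
  have hbV : (A *ᵥ x + |x|) ∈ V := by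
    refine Set.mem_iInter.2 fun j => ?_
    intro hj
    constructor
    · rw [hb1, inv_mulVec_cancel B₁ hdet₁ x]
      exact hstrict j hj s (fun k hk => by simp [hs, hk])
    · rw [hb2, inv_mulVec_cancel B₂ hdet₂ x]
      exact hstrict j hj s' (fun k hk => by simp [hs', hk])
  refine Filter.eventually_of_mem (hVopen.mem_nhds hbV) fun y hy => ?_
  have hyV := Set.mem_iInter.1 hy
  by_cases hcase : 0 ≤ (B₁⁻¹ *ᵥ y) i₀
  · refine ⟨B₁⁻¹ *ᵥ y, ?_⟩
    have hord : ∀ j, 0 ≤ dsg s j * (B₁⁻¹ *ᵥ y) j := by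
      intro j
      by_cases hj : j = i₀
      · subst hj
        have : dsg s j = 1 := by unfold dsg; simp [hs]
        rw [this, one_mul]; exact hcase
      · exact le_of_lt ((hyV j) hj).1
    rw [ave_eq_on_orth A hord, ← hB₁, mulVec_inv_cancel B₁ hdet₁ y]
  · refine ⟨B₂⁻¹ *ᵥ y, ?_⟩
    have hcase2 : (B₂⁻¹ *ᵥ y) i₀ ≤ 0 := by
      have := hrel y
      nlinarith [not_le.1 hcase]
    have hord : ∀ j, 0 ≤ dsg s' j * (B₂⁻¹ *ᵥ y) j := by
      intro j
      by_cases hj : j = i₀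
      · subst hj
        have : dsg s' j = -1 := by unfold dsg; simp [hs']
        rw [this, neg_one_mul]
        linarith
      · exact le_of_lt ((hyV j) hj).2
    rw [ave_eq_on_orth A hord, ← hB₂, mulVec_inv_cancel B₂ hdet₂ y]




theorem self_orth {n : ℕ} (x : Fin n → ℝ) :
    ∀ j, 0 ≤ dsg (fun i => decide (0 ≤ x i)) j * x j := by
  intro j
  unfold dsg
  by_cases hj : 0 ≤ x j <;> simp [hj]
  linarith [not_le.1 hj]

theorem ave_injective {n : ℕ} (A : Matrix (Fin n) (Fin n) ℝ)
    (hinv : ∀ d : Fin n → ℝ, (∀ i, d i ∈ Set.Icc (-1 : ℝ) 1) →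
      (A + Matrix.diagonal d).det ≠ 0)
    {x y : Fin n → ℝ} (hxy : A *ᵥ x + |x| = A *ᵥ y + |y|) : x = y := by
  set d : Fin n → ℝ := fun i => if x i = y i then 0 else (|x i| - |y i|) / (x i - y i) with hd
  have hdbox : ∀ i, d i ∈ Set.Icc (-1 : ℝ) 1 := by
    intro i
    rw [hd]
    by_cases hi : x i = y i
    · simp [hi]
    · simp only [hi, if_false]
      have hsub : x i - y i ≠ 0 := sub_ne_zero.2 hi
      rw [Set.mem_Icc, ← abs_le, abs_div]
      rw [div_le_one (abs_pos.2 hsub)]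
      exact abs_abs_sub_abs_le_abs_sub _ _
  have hmul : (A + Matrix.diagonal d) *ᵥ (x - y) = 0 := by
    rw [Matrix.add_mulVec]
    have h1 : A *ᵥ (x - y) = A *ᵥ x - A *ᵥ y := by
      rw [Matrix.mulVec_sub]
    rw [h1]
    funext i
    have h2 : (Matrix.diagonal d *ᵥ (x - y)) i = d i * (x i - y i) := by
      rw [Matrix.mulVec_diagonal]; rfl
    have h3 : d i * (x i - y i) = |x i| - |y i| := by
      rw [hd]
      by_cases hi : x i = y i
      · simp [hi]
      · simp only [hi, if_false]
        rw [div_mul_eq_mul_div, mul_div_assoc, div_self (sub_ne_zero.2 hi), mul_one]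
    have h4 := congrFun hxy i
    simp only [Pi.add_apply, Pi.abs_apply, Pi.sub_apply, Pi.zero_apply] at h4 ⊢
    rw [h2, h3]
    linarith
  have := mulVec_inj _ (hinv d hdbox) (a₁ := x - y) (a₂ := 0) (by simpa using hmul)
  exact sub_eq_zero.1 (by simpa using this)

theorem local_surj_interior {n : ℕ} (A : Matrix (Fin n) (Fin n) ℝ)
    (hinv : ∀ d : Fin n → ℝ, (∀ i, d i ∈ Set.Icc (-1 : ℝ) 1) →
      (A + Matrix.diagonal d).det ≠ 0)
    (x : Fin n → ℝ) (hx : ∀ j, x j ≠ 0) :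
    ∀ᶠ y in nhds (A *ᵥ x + |x|) , ∃ z, A *ᵥ z + |z| = y := by
  set s : Fin n → Bool := fun i => decide (0 ≤ x i) with hs
  set B := A + Matrix.diagonal (dsg s) with hB
  have hdet : B.det ≠ 0 := hinv _ (dsg_box s)
  have hxo : ∀ j, 0 ≤ dsg s j * x j := self_orth x
  have hxs : ∀ j, 0 < dsg s j * x j := by
    intro j
    rcases (hxo j).lt_or_eq with h | h
    · exact h
    · exfalso
      have : dsg s j ≠ 0 := by unfold dsg; by_cases hj : s j <;> simp [hj]
      exact hx j (by
        rcases mul_eq_zero.1 h.symm with hc | hc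
        · exact absurd hc this
        · exact hc)
  have hb : A *ᵥ x + |x| = B *ᵥ x := ave_eq_on_orth A hxo
  set V : Set (Fin n → ℝ) := ⋂ j, {y | 0 < dsg s j * (B⁻¹ *ᵥ y) j} with hV
  have hVopen : IsOpen V := by
    apply isOpen_iInter_of_finite
    intro j
    have : Continuous fun y => dsg s j * (B⁻¹ *ᵥ y) j :=
      continuous_const.mul ((continuous_apply j).comp (mulVec_continuous B⁻¹))
    exact isOpen_lt continuous_const this
  have hbV : (A *ᵥ x + |x|) ∈ V := by
    rw [hb, hV]
    refine Set.mem_iInter.2 fun j => ?_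
    simp only [Set.mem_setOf_eq, inv_mulVec_cancel B hdet x]
    exact hxs j
  refine Filter.eventually_of_mem (hVopen.mem_nhds hbV) fun y hy => ?_
  refine ⟨B⁻¹ *ᵥ y, ?_⟩
  have hyo : ∀ j, 0 ≤ dsg s j * (B⁻¹ *ᵥ y) j := by
    intro j
    exact le_of_lt (Set.mem_iInter.1 hy j)
  rw [ave_eq_on_orth A hyo, ← hB, mulVec_inv_cancel B hdet y]

open MeasureTheory in
theorem ave_surjective {n : ℕ} (A : Matrix (Fin n) (Fin n) ℝ)
    (hinv : ∀ d : Fin n → ℝ, (∀ i, d i ∈ Set.Icc (-1 : ℝ) 1) →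
      (A + Matrix.diagonal d).det ≠ 0)
    (hsign : ∀ d d' : Fin n → ℝ, (∀ i, d i ∈ Set.Icc (-1 : ℝ) 1) →
      (∀ i, d' i ∈ Set.Icc (-1 : ℝ) 1) →
      0 < (A + Matrix.diagonal d).det * (A + Matrix.diagonal d').det)
    (b : Fin n → ℝ) : ∃ z, A *ᵥ z + |z| = b := by
  classical
  set R : Set (Fin n → ℝ) := {y | ∃ z, A *ᵥ z + |z| = y} with hR
  set B : (Fin n → Bool) → Matrix (Fin n) (Fin n) ℝ :=
    fun s => A + Matrix.diagonal (dsg s) with hBdef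
  have hdet : ∀ s, (B s).det ≠ 0 := fun s => hinv _ (dsg_box s)
  -- R is closed
  have hReq : R = ⋃ s : Fin n → Bool, {y | ∀ j, 0 ≤ dsg s j * ((B s)⁻¹ *ᵥ y) j} := by
    ext y
    constructor
    · rintro ⟨z, hz⟩
      refine Set.mem_iUnion.2 ⟨fun i => decide (0 ≤ z i), ?_⟩
      have horth := self_orth z
      have : y = B (fun i => decide (0 ≤ z i)) *ᵥ z := by
        rw [← hz]; exact ave_eq_on_orth A horth
      intro j
      rw [this, inv_mulVec_cancel _ (hdet _) z]
      exact horth j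
    · intro hy
      obtain ⟨s, hs⟩ := Set.mem_iUnion.1 hy
      refine ⟨(B s)⁻¹ *ᵥ y, ?_⟩
      rw [ave_eq_on_orth A hs, mulVec_inv_cancel _ (hdet s) y]
  have hRclosed : IsClosed R := by
    rw [hReq]
    apply isClosed_iUnion_of_finite
    intro s
    have : {y : Fin n → ℝ | ∀ j, 0 ≤ dsg s j * ((B s)⁻¹ *ᵥ y) j}
        = ⋂ j, {y | 0 ≤ dsg s j * ((B s)⁻¹ *ᵥ y) j} := by
      ext y; simp [Set.mem_iInter]
    rw [this]
    apply isClosed_iInter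
    intro j
    exact isClosed_le continuous_const
      (continuous_const.mul ((continuous_apply j).comp (mulVec_continuous (B s)⁻¹)))
  -- the singular set T
  set T : Set (Fin n → ℝ) := ⋃ (s : Fin n → Bool) (i : Fin n) (j : Fin n),
      {y | i ≠ j ∧ ((B s)⁻¹ *ᵥ y) i = 0 ∧ ((B s)⁻¹ *ᵥ y) j = 0} with hTdef
  -- functionals
  set phi : (Fin n → Bool) → Fin n → ((Fin n → ℝ) →ₗ[ℝ] ℝ) :=
    fun s i => (LinearMap.proj i).comp (Matrix.mulVecLin (B s)⁻¹) with hphidef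
  have phi_apply : ∀ s i y, phi s i y = ((B s)⁻¹ *ᵥ y) i := fun s i y => rfl
  have phi_basis : ∀ s i j, phi s i ((B s) *ᵥ Pi.single j 1) = (Pi.single j 1 : Fin n → ℝ) i := by
    intro s i j
    rw [phi_apply, inv_mulVec_cancel _ (hdet s)]
  -- T is null
  have hTnull : volume T = 0 := by
    refine measure_iUnion_null fun s => measure_iUnion_null fun i => measure_iUnion_null fun j => ?_
    by_cases hij : i = j
    · have : {y : Fin n → ℝ | i ≠ j ∧ ((B s)⁻¹ *ᵥ y) i = 0 ∧ ((B s)⁻¹ *ᵥ y) j = 0} = ∅ := by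
        ext y; simp [hij]
      simp [this]
    · have hker : LinearMap.ker (phi s i) ≠ ⊤ := by
        intro htop
        have h1 : phi s i ((B s) *ᵥ Pi.single i 1) = 0 := by
          rw [LinearMap.ker_eq_top] at htop
          rw [htop]; rfl
        rw [phi_basis s i i] at h1
        simp at h1
      refine measure_mono_null ?_ (Measure.addHaar_submodule volume _ hker)
      intro y hy
      exact LinearMap.mem_ker.2 hy.2.1
  have hTcompl_dense : Dense Tᶜ := by
    intro y
    rw [mem_closure_iff]
    intro o ho hyo
    by_contra hempty
    rw [Set.not_nonempty_iff_eq_empty] at hempty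
    have hoT : o ⊆ T := by
      intro w hw
      by_contra hwT
      exact absurd hempty (Set.nonempty_iff_ne_empty.1 ⟨w, hw, hwT⟩)
    have := ho.measure_pos volume ⟨y, hyo⟩
    rw [show volume o = 0 from measure_mono_null hoT hTnull] at this
    exact lt_irrefl _ this
  -- membership criterion for T
  have hTmem : ∀ y, y ∈ T ↔ ∃ s i j, i ≠ j ∧ phi s i y = 0 ∧ phi s j y = 0 := by
    intro y
    simp only [hTdef, Set.mem_iUnion, Set.mem_setOf_eq]
    rfl
  -- the chi functionals
  set chi : (Fin n → Bool) → Fin n → Fin n → (Fin n → ℝ) → ((Fin n → ℝ) →ₗ[ℝ] ℝ) :=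
    fun s i j p => (phi s j p) • (phi s i) - (phi s i p) • (phi s j) with hchidef
  have chi_self : ∀ s i j p, chi s i j p p = 0 := by
    intro s i j p
    simp only [hchidef, LinearMap.sub_apply, LinearMap.smul_apply, smul_eq_mul]
    ring
  have chi_ne : ∀ s i j (p : Fin n → ℝ), i ≠ j → p ∉ T → chi s i j p ≠ 0 := by
    intro s i j p hij hp h0
    have hnot : ¬(phi s i p = 0 ∧ phi s j p = 0) := by
      intro hc
      exact hp ((hTmem p).2 ⟨s, i, j, hij, hc.1, hc.2⟩)
    have e1 : chi s i j p ((B s) *ᵥ Pi.single i 1) = phi s j p := by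
      simp only [hchidef, LinearMap.sub_apply, LinearMap.smul_apply, smul_eq_mul]
      rw [phi_basis s i i, phi_basis s j i]
      rw [Pi.single_eq_same, Pi.single_eq_of_ne (Ne.symm hij)]
      ring
    have e2 : chi s i j p ((B s) *ᵥ Pi.single j 1) = -(phi s i p) := by
      simp only [hchidef, LinearMap.sub_apply, LinearMap.smul_apply, smul_eq_mul]
      rw [phi_basis s i j, phi_basis s j j]
      rw [Pi.single_eq_same, Pi.single_eq_of_ne hij]
      ring
    rw [h0] at e1 e2
    simp only [LinearMap.zero_apply] at e1 e2
    apply hnot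
    constructor
    · rw [← neg_eq_zero]; exact e2.symm
    · exact e1.symm
  -- segments from a point p ∉ T to suitable z avoid T
  have hseg : ∀ (p : Fin n → ℝ), p ∉ T → ∀ z : Fin n → ℝ,
      (∀ s i j, i ≠ j → chi s i j p z ≠ 0) → segment ℝ p z ⊆ Tᶜ := by
    intro p hp z hz q hq hqT
    obtain ⟨s, i, j, hij, hqi, hqj⟩ := (hTmem q).1 hqT
    obtain ⟨a, c, ha, hc, hac, rfl⟩ := hq
    have hchiq : chi s i j p (a • p + c • z) = 0 := by
      simp only [hchidef, LinearMap.sub_apply, LinearMap.smul_apply, smul_eq_mul]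
      rw [hqi, hqj]; ring
    rw [map_add, LinearMap.map_smul, LinearMap.map_smul, chi_self, smul_zero, zero_add, smul_eq_mul] at hchiq
    have hc0 : c = 0 := by
      rcases mul_eq_zero.1 hchiq with h | h
      · exact h
      · exact absurd h (hz s i j hij)
    have ha1 : a = 1 := by linarith
    rw [hc0, ha1, one_smul, zero_smul, add_zero] at hqT
    exact hp hqT
  -- existence of a good z for a pair of points outside T
  have hgoodz : ∀ (x y : Fin n → ℝ), x ∉ T → y ∉ T → ∃ z : Fin n → ℝ,
      (∀ s i j, i ≠ j → chi s i j x z ≠ 0) ∧ (∀ s i j, i ≠ j → chi s i j y z ≠ 0) := by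
    intro x y hx hy
    set Bad : Set (Fin n → ℝ) := ⋃ (s : Fin n → Bool) (i : Fin n) (j : Fin n),
      (if i ≠ j then ((LinearMap.ker (chi s i j x) : Set (Fin n → ℝ))
        ∪ (LinearMap.ker (chi s i j y) : Set (Fin n → ℝ))) else ∅) with hBad
    have hBadnull : volume Bad = 0 := by
      refine measure_iUnion_null fun s => measure_iUnion_null fun i =>
        measure_iUnion_null fun j => ?_
      by_cases hij : i ≠ j
      · rw [if_pos hij]
        refine measure_union_null ?_ ?_
        · exact Measure.addHaar_submodule volume _
            (fun htop => chi_ne s i j x hij hx (LinearMap.ker_eq_top.1 htop))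
        · exact Measure.addHaar_submodule volume _
            (fun htop => chi_ne s i j y hij hy (LinearMap.ker_eq_top.1 htop))
      · rw [if_neg hij]; simp
    have : Bad ≠ Set.univ := by
      intro hb
      rw [hb] at hBadnull
      exact (isOpen_univ.measure_pos volume ⟨0, trivial⟩).ne' hBadnull
    obtain ⟨z, hzBad⟩ : ∃ z, z ∉ Bad := by
      by_contra hall
      push_neg at hall
      exact this (Set.eq_univ_of_forall hall)
    refine ⟨z, ?_, ?_⟩ <;> intro s i j hij <;> intro h0 <;> apply hzBad
    · refine Set.mem_iUnion.2 ⟨s, Set.mem_iUnion.2 ⟨i, Set.mem_iUnion.2 ⟨j, ?_⟩⟩⟩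
      rw [if_pos hij]
      exact Or.inl (LinearMap.mem_ker.2 h0)
    · refine Set.mem_iUnion.2 ⟨s, Set.mem_iUnion.2 ⟨i, Set.mem_iUnion.2 ⟨j, ?_⟩⟩⟩
      rw [if_pos hij]
      exact Or.inr (LinearMap.mem_ker.2 h0)
  -- Tᶜ is preconnected
  have hconn : IsPreconnected Tᶜ := by
    apply isPreconnected_of_forall_pair
    intro x hx y hy
    obtain ⟨z, hzx, hzy⟩ := hgoodz x y hx hy
    refine ⟨segment ℝ x z ∪ segment ℝ z y, ?_, ?_, ?_, ?_⟩
    · apply Set.union_subset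
      · exact hseg x hx z hzx
      · rw [segment_symm]
        exact hseg y hy z hzy
    · exact Or.inl (left_mem_segment ℝ x z)
    · exact Or.inr (right_mem_segment ℝ z y)
    · exact (convex_segment x z).isPreconnected.union z (right_mem_segment ℝ x z)
        (left_mem_segment ℝ z y) (convex_segment z y).isPreconnected
  -- a point of R outside T
  have hb0 : ∃ b₀, b₀ ∈ R ∧ b₀ ∉ T := by
    set strue : Fin n → Bool := fun _ => true with hstrue
    set O : Set (Fin n → ℝ) := {y | ∀ j, 0 < ((B strue)⁻¹ *ᵥ y) j} with hO
    have hOopen : IsOpen O := by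
      have : O = ⋂ j, {y | 0 < ((B strue)⁻¹ *ᵥ y) j} := by
        ext y; simp [Set.mem_iInter, hO]
      rw [this]
      apply isOpen_iInter_of_finite
      intro j
      exact isOpen_lt continuous_const ((continuous_apply j).comp (mulVec_continuous (B strue)⁻¹))
    have hOne : O.Nonempty := by
      refine ⟨(B strue) *ᵥ (fun _ => 1), fun j => ?_⟩
      rw [inv_mulVec_cancel _ (hdet strue)]
      norm_num
    have : ¬ (O ⊆ T) := by
      intro hsub
      exact (hOopen.measure_pos volume hOne).ne' (measure_mono_null hsub hTnull)
    obtain ⟨b₀, hb₀O, hb₀T⟩ := Set.not_subset.1 this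
    refine ⟨b₀, ?_, hb₀T⟩
    refine ⟨(B strue)⁻¹ *ᵥ b₀, ?_⟩
    have horth : ∀ j, 0 ≤ dsg strue j * ((B strue)⁻¹ *ᵥ b₀) j := by
      intro j
      have : dsg strue j = 1 := by unfold dsg; simp [hstrue]
      rw [this, one_mul]
      exact le_of_lt (hb₀O j)
    rw [ave_eq_on_orth A horth, mulVec_inv_cancel _ (hdet strue) b₀]
  obtain ⟨b₀, hb₀R, hb₀T⟩ := hb0
  -- every point of R ∩ Tᶜ is interior to R
  have hint : ∀ y ∈ R, y ∉ T → y ∈ interior R := by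
    rintro y ⟨x, hx⟩ hyT
    rw [mem_interior_iff_mem_nhds]
    rw [← hx]
    by_cases hall : ∀ j, x j ≠ 0
    · exact (local_surj_interior A hinv x hall).mono (fun y hy => hy)
    · push_neg at hall
      obtain ⟨i₀, hi₀⟩ := hall
      have hrest : ∀ j, j ≠ i₀ → x j ≠ 0 := by
        intro j hj hj0
        apply hyT
        rw [← hx]
        set s : Fin n → Bool := fun i => decide (0 ≤ x i) with hs
        have horth := self_orth x
        have heq : A *ᵥ x + |x| = (B s) *ᵥ x := ave_eq_on_orth A horth
        rw [heq]
        refine Set.mem_iUnion.2 ⟨s, Set.mem_iUnion.2 ⟨i₀, Set.mem_iUnion.2 ⟨j, ?_⟩⟩⟩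
        refine ⟨Ne.symm hj, ?_, ?_⟩ <;> rw [inv_mulVec_cancel _ (hdet s) x]
        · exact hi₀
        · exact hj0
      exact (local_surj_wall A hinv hsign x i₀ hi₀ hrest).mono (fun y hy => hy)
  -- conclude via connectedness
  have hsub : Tᶜ ⊆ interior R ∪ Rᶜ := by
    intro y hy
    by_cases hyR : y ∈ R
    · exact Or.inl (hint y hyR hy)
    · exact Or.inr hyR
  have hdisj : Disjoint (interior R) Rᶜ := by
    rw [Set.disjoint_left]
    intro a ha hac
    exact hac (interior_subset ha)
  rcases hconn.subset_or_subset isOpen_interior (isOpen_compl_iff.2 hRclosed) hdisj hsub with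
    hcase | hcase
  · have hRall : R = Set.univ := by
      apply Set.eq_univ_of_forall
      intro y
      have h1 : Tᶜ ⊆ R := fun w hw => interior_subset (hcase hw)
      have h2 : closure Tᶜ ⊆ R := hRclosed.closure_subset_iff.2 h1
      rw [hTcompl_dense.closure_eq] at h2
      exact h2 trivial
    have hb : b ∈ R := by rw [hRall]; trivial
    exact hb
  · exfalso
    exact (hcase hb₀T) hb₀R

theorem stmt11 {n : ℕ} (A : Matrix (Fin n) (Fin n) ℝ) (hA : IsUnit A)
    (h : ∀ d : Fin n → ℝ, (∀ i, d i ∈ Set.Icc (-1 : ℝ) 1) →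
      specRad (A⁻¹ * Matrix.diagonal d) < 1) :
    ∀ b : Fin n → ℝ, ∃! x : Fin n → ℝ, A *ᵥ x + |x| = b := by
  intro b
  have hinv : ∀ d : Fin n → ℝ, (∀ i, d i ∈ Set.Icc (-1 : ℝ) 1) →
      (A + Matrix.diagonal d).det ≠ 0 := fun d hd => det_add_diag_ne A hA h d hd
  have hsign := det_sign_const A hinv
  obtain ⟨z, hz⟩ := ave_surjective A hinv hsign b
  exact ⟨z, hz, fun y hy => ave_injective A hinv (hy.trans hz.symm)⟩
end
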